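/- Let G be a finite group with a Sylow p-subgroup S, and let P ≤ S. If P is fully normalized in the fusion system of G (i.e., |N_S(P)| ≥ |N_S(Q)| for every Q ≤ S that is G-conjugate to P), then Aut_S(P) = N_S(P)/C_S(P) is a Sylow p-subgroup of Aut_G(P) = N_G(P)/C_G(P). -/

import Mathlib

open Pointwise

private theorem map_rangeRestrict_eq {N A : Type*} [Group N] [Group A] (f : N →* A)
    (H : Subgroup N) : H.map f.rangeRestrict = (H.map f).subgroupOf f.range := by
  ext x
  simp [Subgroup.mem_subgroupOf, Subgroup.mem_map, Subtype.ext_iff]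


/-- Let `G` be a finite group with Sylow `p`-subgroup `S` and `P ≤ S`.
If `P` is fully normalized (i.e. `|N_S(P)| ≥ |N_S(Q)|` for every `G`-conjugate `Q ≤ S` of `P`),
then `Aut_S(P) = N_S(P)/C_S(P)` is a Sylow `p`-subgroup of `Aut_G(P) = N_G(P)/C_G(P)`.
Here `Aut_G(P)` is realized as the range of the conjugation homomorphism
`N_G(P) →* MulAut P`, and `Aut_S(P)` as the range of its restriction to `N_S(P)`. -/
theorem stmt_6 {G : Type*} [Group G] [Fintype G] (p : ℕ) [Fact p.Prime]
    (S : Sylow p G) (P : Subgroup G) (hPS : P ≤ S)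
    (hfn : ∀ g : G, P.map (MulAut.conj g).toMonoidHom ≤ S →
      Nat.card ↥((S : Subgroup G) ⊓ Subgroup.normalizer (P.map (MulAut.conj g).toMonoidHom : Set G)) ≤
        Nat.card ↥((S : Subgroup G) ⊓ (Subgroup.normalizer (P : Set G)))) :
    ∃ Q : Sylow p
        ↥((MulAut.conjNormal :
            ↥(Subgroup.normalizer (P : Set G)) →* MulAut ↥(P.subgroupOf (Subgroup.normalizer (P : Set G)))).range),
      (Q : Subgroup ↥((MulAut.conjNormal :
            ↥(Subgroup.normalizer (P : Set G)) →* MulAut ↥(P.subgroupOf (Subgroup.normalizer (P : Set G)))).range)) =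
        (((MulAut.conjNormal :
            ↥(Subgroup.normalizer (P : Set G)) →* MulAut ↥(P.subgroupOf (Subgroup.normalizer (P : Set G)))).comp
          (Subgroup.inclusion
            (inf_le_right : (S : Subgroup G) ⊓ (Subgroup.normalizer (P : Set G)) ≤ (Subgroup.normalizer (P : Set G))))).range).subgroupOf
          (MulAut.conjNormal :
            ↥(Subgroup.normalizer (P : Set G)) →* MulAut ↥(P.subgroupOf (Subgroup.normalizer (P : Set G)))).range := by
  classical
  set N : Subgroup G := Subgroup.normalizer (P : Set G) with hNdef
  set K : Subgroup G := (S : Subgroup G) ⊓ N with hKdef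
  have hKp : IsPGroup p K := S.2.to_le inf_le_left
  have hKNp : IsPGroup p (K.subgroupOf N) := hKp.comap_subtype
  obtain ⟨T, hKT⟩ := hKNp.exists_le_sylow
  set T' : Subgroup G := T.1.map N.subtype with hT'def
  have hT'p : IsPGroup p T' := T.2.map N.subtype
  have hT'N : T' ≤ N := Subgroup.map_subtype_le T.1
  obtain ⟨S'', hTS''⟩ := hT'p.exists_le_sylow
  obtain ⟨g, hg⟩ := MulAction.exists_smul_eq G S'' S
  have hconj : (S'' : Subgroup G).map (MulAut.conj g).toMonoidHom = S := by
    have := congrArg (fun X : Sylow p G => (X : Subgroup G)) hg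
    exact this
  set c : G →* G := (MulAut.conj g).toMonoidHom with hcdef
  have hcinj : Function.Injective c := (MulAut.conj g).injective
  set Q : Subgroup G := P.map c with hQdef
  have hPT' : P ≤ T' := by
    intro x hx
    have hxN : x ∈ N := Subgroup.le_normalizer hx
    have hxK : (⟨x, hxN⟩ : N) ∈ K.subgroupOf N := by
      simp [Subgroup.mem_subgroupOf, hKdef, hPS hx, hxN]
    exact ⟨⟨x, hxN⟩, hKT hxK, rfl⟩
  have hQS : Q ≤ S := by
    calc Q ≤ T'.map c := Subgroup.map_mono hPT'
    _ ≤ (S'' : Subgroup G).map c := Subgroup.map_mono hTS''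
    _ = S := hconj
  have hTQn : T'.map c ≤ (S : Subgroup G) ⊓ Subgroup.normalizer (Q : Set G) := by
    refine le_inf (le_trans (Subgroup.map_mono hTS'') hconj.le) ?_
    have : N.map c = Subgroup.normalizer (Q : Set G) := Subgroup.map_equiv_normalizer_eq P (MulAut.conj g)
    exact this ▸ Subgroup.map_mono hT'N
  have hcard1 : Nat.card T.1 = Nat.card (T'.map c) := by
    rw [Nat.card_congr (T.1.equivMapOfInjective N.subtype N.subtype_injective).toEquiv.symm.symm]
    exact Nat.card_congr (T'.equivMapOfInjective c hcinj).toEquiv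
  have hcard2 : Nat.card (T'.map c) ≤ Nat.card K := by
    calc Nat.card (T'.map c) ≤ Nat.card ((S : Subgroup G) ⊓ Subgroup.normalizer (Q : Set G) : Subgroup G) :=
          Subgroup.card_le_of_le hTQn
    _ ≤ Nat.card K := hfn g hQS
  have hcard3 : Nat.card K = Nat.card (K.subgroupOf N) :=
    Nat.card_congr (Subgroup.subgroupOfEquivOfLe (inf_le_right : K ≤ N)).toEquiv.symm
  have hTeq : K.subgroupOf N = T.1 :=
    Subgroup.eq_of_le_of_card_ge hKT (by omega)
  -- Conclude
  set f : ↥N →* MulAut ↥(P.subgroupOf N) := MulAut.conjNormal with hfdef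
  refine ⟨T.mapSurjective f.rangeRestrict_surjective, ?_⟩
  rw [Sylow.coe_mapSurjective, ← hTeq, map_rangeRestrict_eq,
    MonoidHom.range_comp, Subgroup.inclusion_range]
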